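/- Let U be a nonempty finite type, let X take values in {A,B}, and let p be any joint pmf of (U,X) with P(U=u)>0 for every u. Then there exists a conditional distribution (Markov kernel) w(q | u, x) from U×{A,B} to the query set {qA, qB, qAB} such that the induced joint distribution of (U,X,Q) (with P(U=u,X=x,Q=q)=p(u,x)·w(q|u,x)) satisfies: (i) decodability: P(X=x, Q=q')=0 for every singleton query q' different from {x}; (ii) privacy: Q is independent of U; and (iii) E[ℓ(Q)] = 2 − π(A) − π(B), where π(x) = min over u of P(X=x|U=u) and ℓ assigns length 1 to qA and qB and length 2 to qAB. -/

import Mathlib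

/-- The two sources. -/
inductive Src | A | B
deriving DecidableEq

instance : Fintype Src := ⟨{Src.A, Src.B}, fun x => by cases x <;> simp⟩

/-- The three possible queries: only source A, only source B, or both. -/
inductive Qry | qA | qB | qAB
deriving DecidableEq

instance : Fintype Qry := ⟨{Qry.qA, Qry.qB, Qry.qAB}, fun x => by cases x <;> simp⟩

/-- The length (download cost) of each query. -/
noncomputable def len : Qry → ℝ
  | Qry.qA => 1
  | Qry.qB => 1
  | Qry.qAB => 2

lemma sum_src (f : Src → ℝ) : ∑ x, f x = f .A + f .B := by
  show Finset.sum _ _ = _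
  rw [show (Finset.univ : Finset Src) = {Src.A, Src.B} from rfl]
  simp

lemma sum_qry (f : Qry → ℝ) : ∑ q, f q = f .qA + f .qB + f .qAB := by
  show Finset.sum _ _ = _
  rw [show (Finset.univ : Finset Qry) = {Qry.qA, Qry.qB, Qry.qAB} from rfl]
  simp [add_assoc]

/-- Achievability: for any joint pmf `p` of `(U,X)` with `P(U=u) > 0` for all `u`, there is a
Markov kernel `w(q|u,x)` such that the induced joint law of `(U,X,Q)` is decodable, private
(Q independent of U), and has expected query length exactly `2 - π(A) - π(B)`. -/
theorem achievability_exists_kernel {U : Type} [Fintype U] [Nonempty U]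
    (p : U → Src → ℝ)
    (hnn : ∀ u x, 0 ≤ p u x)
    (hsum : ∑ u, ∑ x, p u x = 1)
    (hUpos : ∀ u, 0 < ∑ x, p u x) :
    ∃ w : U → Src → Qry → ℝ,
      (∀ u x q, 0 ≤ w u x q) ∧
      (∀ u x, ∑ q, w u x q = 1) ∧
      -- decodability: the singleton query for the other source is never sent
      (∑ u, p u Src.A * w u Src.A Qry.qB = 0) ∧
      (∑ u, p u Src.B * w u Src.B Qry.qA = 0) ∧
      -- privacy: Q is independent of U
      (∀ u q, ∑ x, p u x * w u x q
        = (∑ x, p u x) * (∑ u', ∑ x, p u' x * w u' x q)) ∧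
      -- expected query length
      (∑ u, ∑ x, ∑ q, p u x * w u x q * len q
        = 2 - Finset.univ.inf' Finset.univ_nonempty (fun u => p u Src.A / (∑ x, p u x))
            - Finset.univ.inf' Finset.univ_nonempty (fun u => p u Src.B / (∑ x, p u x))) := by
  classical
  set s : U → ℝ := fun u => ∑ x, p u x with hs
  have hspos : ∀ u, 0 < s u := hUpos
  set πA : ℝ := Finset.univ.inf' Finset.univ_nonempty (fun u => p u Src.A / s u) with hπA
  set πB : ℝ := Finset.univ.inf' Finset.univ_nonempty (fun u => p u Src.B / s u) with hπB
  have hπAnn : 0 ≤ πA :=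
    Finset.le_inf' _ _ (fun u _ => div_nonneg (hnn u _) (hspos u).le)
  have hπBnn : 0 ≤ πB :=
    Finset.le_inf' _ _ (fun u _ => div_nonneg (hnn u _) (hspos u).le)
  have hπAle : ∀ u, πA * s u ≤ p u Src.A := fun u =>
    (le_div_iff₀ (hspos u)).mp (Finset.inf'_le _ (Finset.mem_univ u))
  have hπBle : ∀ u, πB * s u ≤ p u Src.B := fun u =>
    (le_div_iff₀ (hspos u)).mp (Finset.inf'_le _ (Finset.mem_univ u))
  set wA : U → ℝ := fun u => if p u Src.A = 0 then 0 else πA * s u / p u Src.A with hwA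
  set wB : U → ℝ := fun u => if p u Src.B = 0 then 0 else πB * s u / p u Src.B with hwB
  have hwAnn : ∀ u, 0 ≤ wA u := by
    intro u; simp only [hwA]; split
    · exact le_refl 0
    · exact div_nonneg (mul_nonneg hπAnn (hspos u).le) (hnn u _)
  have hwBnn : ∀ u, 0 ≤ wB u := by
    intro u; simp only [hwB]; split
    · exact le_refl 0
    · exact div_nonneg (mul_nonneg hπBnn (hspos u).le) (hnn u _)
  have hwAle : ∀ u, wA u ≤ 1 := by
    intro u; simp only [hwA]; split
    · exact zero_le_one
    · next h => exact div_le_one_of_le₀ (hπAle u) (hnn u _)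
  have hwBle : ∀ u, wB u ≤ 1 := by
    intro u; simp only [hwB]; split
    · exact zero_le_one
    · next h => exact div_le_one_of_le₀ (hπBle u) (hnn u _)
  have hpwA : ∀ u, p u Src.A * wA u = πA * s u := by
    intro u; simp only [hwA]; split
    · next h =>
      have h1 : πA ≤ 0 := by
        have := hπAle u; nlinarith [hspos u]
      have : πA = 0 := le_antisymm h1 hπAnn
      simp [this, h]
    · next h => field_simp
  have hpwB : ∀ u, p u Src.B * wB u = πB * s u := by
    intro u; simp only [hwB]; split
    · next h =>
      have h1 : πB ≤ 0 := by
        have := hπBle u; nlinarith [hspos u]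
      have : πB = 0 := le_antisymm h1 hπBnn
      simp [this, h]
    · next h => field_simp
  have hstot : ∑ u, s u = 1 := hsum
  refine ⟨fun u x q =>
    match x, q with
    | Src.A, Qry.qA => wA u
    | Src.A, Qry.qB => 0
    | Src.A, Qry.qAB => 1 - wA u
    | Src.B, Qry.qA => 0
    | Src.B, Qry.qB => wB u
    | Src.B, Qry.qAB => 1 - wB u, ?_, ?_, ?_, ?_, ?_, ?_⟩
  · rintro u (_|_) (_|_|_) <;> simp [hwAnn u, hwBnn u, hwAle u, hwBle u]
  · rintro u (_|_) <;> rw [sum_qry] <;> ring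
  · simp
  · simp
  · intro u q
    have key : ∀ q : Qry, ∀ u : U, (∑ x, p u x * (fun x q =>
        match x, q with
        | Src.A, Qry.qA => wA u
        | Src.A, Qry.qB => (0:ℝ)
        | Src.A, Qry.qAB => 1 - wA u
        | Src.B, Qry.qA => 0
        | Src.B, Qry.qB => wB u
        | Src.B, Qry.qAB => 1 - wB u) x q)
        = (match q with
          | Qry.qA => πA
          | Qry.qB => πB
          | Qry.qAB => 1 - πA - πB) * s u := by
      have hsu : ∀ u : U, s u = p u Src.A + p u Src.B := fun u => sum_src _
      rintro (_|_|_) u <;> rw [sum_src] <;> simp only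
      · linear_combination hpwA u
      · linear_combination hpwB u
      · linear_combination (-1 : ℝ) * hpwA u - hpwB u - hsu u
    rw [key q u]
    have : (∑ u', ∑ x, p u' x * (fun x q =>
        match x, q with
        | Src.A, Qry.qA => wA u'
        | Src.A, Qry.qB => (0:ℝ)
        | Src.A, Qry.qAB => 1 - wA u'
        | Src.B, Qry.qA => 0
        | Src.B, Qry.qB => wB u'
        | Src.B, Qry.qAB => 1 - wB u') x q)
        = (match q with
          | Qry.qA => πA
          | Qry.qB => πB
          | Qry.qAB => 1 - πA - πB) := by
      calc _ = ∑ u', (match q with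
          | Qry.qA => πA
          | Qry.qB => πB
          | Qry.qAB => 1 - πA - πB) * s u' := Finset.sum_congr rfl (fun u' _ => key q u')
        _ = _ := by rw [← Finset.mul_sum, hstot, mul_one]
    rw [this]; ring
  · have : ∀ u, (∑ x, ∑ q, p u x * (fun x q =>
        match x, q with
        | Src.A, Qry.qA => wA u
        | Src.A, Qry.qB => (0:ℝ)
        | Src.A, Qry.qAB => 1 - wA u
        | Src.B, Qry.qA => 0
        | Src.B, Qry.qB => wB u
        | Src.B, Qry.qAB => 1 - wB u) x q * len q)
        = (2 - πA - πB) * s u := by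
      intro u
      have hsu : s u = p u Src.A + p u Src.B := sum_src _
      rw [sum_src, sum_qry, sum_qry]
      simp only [len]
      linear_combination (-1 : ℝ) * hpwA u - hpwB u - (2 : ℝ) * hsu
    calc (∑ u, ∑ x, ∑ q, _) = ∑ u, (2 - πA - πB) * s u :=
          Finset.sum_congr rfl (fun u _ => this u)
      _ = (2 - πA - πB) := by rw [← Finset.mul_sum, hstot, mul_one]
      _ = _ := by ring
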